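/- Type C linkage for mixed operators: let λ+ρ be a strictly decreasing sequence of positive integers, and suppose μ = λ − ε_i and ν = λ + ε_j are dominant with i ≠ j. Then μ and ν are linked (their ρ-shifts are in the same W_ℓ-orbit) if and only if (λ+ρ)_i ≡ −(λ+ρ)_j (mod ℓ). -/

import Mathlib

/-- The standard basis vector `ε_i` of `ℚ^N`. -/
def eps {N : ℕ} (i : Fin N) : Fin N → ℚ := fun t => if t = i then 1 else 0

/-- The affine reflection `s_{α,k}` with root `α`, coroot `αv` and constant `c = k ℓ_α`:
`x ↦ x − ((x, αv) − c) α`, i.e. `s_α(x) + c·α`. -/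
def affRef {N : ℕ} (α αv : Fin N → ℚ) (c : ℚ) (x : Fin N → ℚ) : Fin N → ℚ :=
  fun t => x t - ((∑ s, x s * αv s) - c) * α t

/-- The affine reflections generating `W_ℓ` in type `C_N`: the roots are
`ε_i ± ε_j` (`i < j`, coroot equal to the root, `ℓ_α = ℓ`) and the long roots `2ε_i`
(coroot `ε_i`, `ℓ_α = ℓ / gcd(ℓ,2)`). -/
def IsCRef (N ℓ : ℕ) (f : (Fin N → ℚ) → (Fin N → ℚ)) : Prop :=
  (∃ i j : Fin N, ∃ k : ℤ, i < j ∧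
    (f = affRef (eps i - eps j) (eps i - eps j) ((k : ℚ) * ℓ) ∨
     f = affRef (eps i + eps j) (eps i + eps j) ((k : ℚ) * ℓ))) ∨
  (∃ i : Fin N, ∃ k : ℤ,
    f = affRef ((2 : ℚ) • eps i) (eps i) ((k : ℚ) * ((ℓ : ℚ) / (Nat.gcd ℓ 2))))

/-- Two (ρ-shifted) weights are linked in type `C_N` if they lie in the same orbit of
the group generated by the affine reflections of `W_ℓ`. -/
def CLinked (N ℓ : ℕ) (x y : Fin N → ℚ) : Prop :=
  Relation.EqvGen (fun u v => ∃ f, IsCRef N ℓ f ∧ v = f u) x y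

/-- Dominant weights of type `C_N`: weakly decreasing non-negative integer tuples. -/
def DominantC (N : ℕ) (lam : Fin N → ℤ) : Prop :=
  (∀ s t : Fin N, s ≤ t → lam t ≤ lam s) ∧ ∀ t, 0 ≤ lam t

/-- `λ − ε_i`. -/
def subE {N : ℕ} (lam : Fin N → ℤ) (i : Fin N) : Fin N → ℤ :=
  fun t => lam t - if t = i then 1 else 0

/-- `λ + ε_i`. -/
def addE {N : ℕ} (lam : Fin N → ℤ) (i : Fin N) : Fin N → ℤ :=
  fun t => lam t + if t = i then 1 else 0

/-- The ρ-shift in type `C_N`: `(λ+ρ)_j = λ_j + (N+1−j)` (0-indexed: `λ_j + (N−j)`). -/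
def shiftC (N : ℕ) (lam : Fin N → ℤ) : Fin N → ℚ :=
  fun t => (lam t : ℚ) + ((N : ℚ) - ((t : ℕ) : ℚ))

/-! ### Auxiliary machinery -/

lemma sum_mul_eps {N : ℕ} (x : Fin N → ℚ) (i : Fin N) : ∑ s, x s * eps i s = x i := by
  simp [eps, mul_ite]

lemma sum_mul_sub {N : ℕ} (x : Fin N → ℚ) (i j : Fin N) :
    ∑ s, x s * (eps i - eps j) s = x i - x j := by
  simp only [Pi.sub_apply, mul_sub, Finset.sum_sub_distrib, sum_mul_eps]

lemma sum_mul_add {N : ℕ} (x : Fin N → ℚ) (i j : Fin N) :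
    ∑ s, x s * (eps i + eps j) s = x i + x j := by
  simp only [Pi.add_apply, mul_add, Finset.sum_add_distrib, sum_mul_eps]

lemma affSub_i {N : ℕ} (x : Fin N → ℚ) (i j : Fin N) (hij : i ≠ j) (c : ℚ) :
    affRef (eps i - eps j) (eps i - eps j) c x i = x j + c := by
  show x i - ((∑ s, x s * (eps i - eps j) s) - c) * ((eps i - eps j) i) = x j + c
  rw [sum_mul_sub]
  simp [Pi.sub_apply, eps, hij, hij.symm]
  ring

lemma affSub_j {N : ℕ} (x : Fin N → ℚ) (i j : Fin N) (hij : i ≠ j) (c : ℚ) :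
    affRef (eps i - eps j) (eps i - eps j) c x j = x i + -c := by
  show x j - ((∑ s, x s * (eps i - eps j) s) - c) * ((eps i - eps j) j) = x i + -c
  rw [sum_mul_sub]
  simp [Pi.sub_apply, eps, hij, hij.symm]
  ring

lemma affSub_t {N : ℕ} (x : Fin N → ℚ) (i j t : Fin N) (hti : t ≠ i) (htj : t ≠ j) (c : ℚ) :
    affRef (eps i - eps j) (eps i - eps j) c x t = x t := by
  show x t - ((∑ s, x s * (eps i - eps j) s) - c) * ((eps i - eps j) t) = x t
  simp only [Pi.sub_apply, eps, if_neg hti, if_neg htj]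
  ring

lemma affAdd_i {N : ℕ} (x : Fin N → ℚ) (i j : Fin N) (hij : i ≠ j) (c : ℚ) :
    affRef (eps i + eps j) (eps i + eps j) c x i = -(x j) + c := by
  show x i - ((∑ s, x s * (eps i + eps j) s) - c) * ((eps i + eps j) i) = -(x j) + c
  rw [sum_mul_add]
  simp [Pi.add_apply, eps, hij, hij.symm]
  ring

lemma affAdd_j {N : ℕ} (x : Fin N → ℚ) (i j : Fin N) (hij : i ≠ j) (c : ℚ) :
    affRef (eps i + eps j) (eps i + eps j) c x j = -(x i) + c := by
  show x j - ((∑ s, x s * (eps i + eps j) s) - c) * ((eps i + eps j) j) = -(x i) + c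
  rw [sum_mul_add]
  simp [Pi.add_apply, eps, hij, hij.symm]
  ring

lemma affAdd_t {N : ℕ} (x : Fin N → ℚ) (i j t : Fin N) (hti : t ≠ i) (htj : t ≠ j) (c : ℚ) :
    affRef (eps i + eps j) (eps i + eps j) c x t = x t := by
  show x t - ((∑ s, x s * (eps i + eps j) s) - c) * ((eps i + eps j) t) = x t
  simp only [Pi.add_apply, eps, if_neg hti, if_neg htj]
  ring

lemma affLong_i {N : ℕ} (x : Fin N → ℚ) (i : Fin N) (c : ℚ) :
    affRef ((2:ℚ) • eps i) (eps i) c x i = -(x i) + 2 * c := by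
  show x i - ((∑ s, x s * eps i s) - c) * (((2:ℚ) • eps i) i) = -(x i) + 2 * c
  rw [sum_mul_eps]
  simp [Pi.smul_apply, smul_eq_mul, eps]
  ring

lemma affLong_t {N : ℕ} (x : Fin N → ℚ) (i t : Fin N) (hti : t ≠ i) (c : ℚ) :
    affRef ((2:ℚ) • eps i) (eps i) c x t = x t := by
  show x t - ((∑ s, x s * eps i s) - c) * (((2:ℚ) • eps i) t) = x t
  simp only [Pi.smul_apply, smul_eq_mul, eps, if_neg hti]
  ring

/-- `ψ : ℚ → ZMod ℓ`, reduction mod `ℓ` on integers, junk value `0` elsewhere. -/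
def psi (ℓ : ℕ) (x : ℚ) : ZMod ℓ :=
  if x.den = 1 then ((x.num : ℤ) : ZMod ℓ) else 0

lemma psi_intCast (ℓ : ℕ) (n : ℤ) : psi ℓ ((n : ℤ) : ℚ) = (n : ZMod ℓ) := by
  simp [psi]

lemma psi_shift (ℓ : ℕ) (x : ℚ) (m : ℤ) (hm : (ℓ:ℤ) ∣ m) : psi ℓ (x + (m:ℚ)) = psi ℓ x := by
  by_cases h : x.den = 1
  · have hx : x = ((x.num : ℤ) : ℚ) := (Rat.coe_int_num_of_den_eq_one h).symm
    rw [hx, show ((x.num:ℤ):ℚ) + (m:ℚ) = ((x.num + m : ℤ):ℚ) by push_cast; ring,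
      psi_intCast, psi_intCast]
    obtain ⟨c, rfl⟩ := hm
    push_cast [ZMod.natCast_self]
    ring
  · have h2 : ¬ (x + (m:ℚ)).den = 1 := by
      intro hd
      have : x = (((x + (m:ℚ)).num - m : ℤ) : ℚ) := by
        have := Rat.coe_int_num_of_den_eq_one hd
        push_cast
        linarith
      apply h
      rw [this, Rat.den_intCast]
    rw [psi, if_neg h2, psi, if_neg h]

/-- The symmetrized pair `{ψ x, ψ(−x)}`. -/
def prm (ℓ : ℕ) (x : ℚ) : Multiset (ZMod ℓ) := {psi ℓ x, psi ℓ (-x)}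

lemma prm_neg (ℓ : ℕ) (x : ℚ) : prm ℓ (-x) = prm ℓ x := by
  simp only [prm, neg_neg]
  exact Multiset.pair_comm _ _

lemma prm_shift (ℓ : ℕ) (x : ℚ) (m : ℤ) (hm : (ℓ:ℤ) ∣ m) : prm ℓ (x + (m:ℚ)) = prm ℓ x := by
  unfold prm
  rw [psi_shift ℓ x m hm]
  rw [show -(x + (m:ℚ)) = -x + ((-m : ℤ):ℚ) by push_cast; ring,
    psi_shift ℓ (-x) (-m) (dvd_neg.mpr hm)]

lemma prm_shift' (ℓ : ℕ) (x c : ℚ) (m : ℤ) (hc : c = ((m : ℤ):ℚ)) (hm : (ℓ:ℤ) ∣ m) :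
    prm ℓ (x + c) = prm ℓ x := by rw [hc]; exact prm_shift ℓ x m hm

lemma prm_int (ℓ : ℕ) (n : ℤ) : prm ℓ ((n:ℤ):ℚ) = {(n : ZMod ℓ), (-n : ZMod ℓ)} := by
  unfold prm
  rw [psi_intCast, show -((n:ℤ):ℚ) = ((-n:ℤ):ℚ) by push_cast; ring, psi_intCast]
  push_cast
  rfl

lemma sum_split {N : ℕ} {M : Type*} [AddCommMonoid M] (g : Fin N → M) {i j : Fin N} (hij : i ≠ j) :
    ∑ t, g t = g i + g j + ∑ t ∈ (Finset.univ.erase i).erase j, g t := by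
  rw [← Finset.add_sum_erase _ g (Finset.mem_univ i)]
  rw [← Finset.add_sum_erase _ g (Finset.mem_erase.mpr ⟨Ne.symm hij, Finset.mem_univ j⟩)]
  rw [add_assoc]

lemma pair_cancel {N : ℕ} {M : Type*} [AddCancelCommMonoid M] (g h : Fin N → M) {i j : Fin N}
    (hij : i ≠ j) (hrest : ∀ t, t ≠ i → t ≠ j → g t = h t) (hsum : ∑ t, g t = ∑ t, h t) :
    g i + g j = h i + h j := by
  rw [sum_split g hij, sum_split h hij] at hsum
  have he : ∑ t ∈ (Finset.univ.erase i).erase j, g t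
      = ∑ t ∈ (Finset.univ.erase i).erase j, h t := by
    apply Finset.sum_congr rfl
    intro t ht
    simp only [Finset.mem_erase] at ht
    exact hrest t ht.2.1 ht.1
  rw [he] at hsum
  exact add_right_cancel hsum

/-- The linkage invariant: the multiset of symmetrized residues of the coordinates. -/
def InvC (ℓ N : ℕ) (x : Fin N → ℚ) : Multiset (ZMod ℓ) := ∑ t : Fin N, prm ℓ (x t)

lemma InvC_ref {N ℓ : ℕ} {f : (Fin N → ℚ) → (Fin N → ℚ)} (hf : IsCRef N ℓ f)
    (x : Fin N → ℚ) : InvC ℓ N (f x) = InvC ℓ N x := by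
  rcases hf with ⟨i, j, k, hij, hor | hor⟩ | ⟨i, k, hor⟩
  · subst hor
    have hij' : i ≠ j := ne_of_lt hij
    unfold InvC
    rw [sum_split _ hij', sum_split (fun t => prm ℓ (x t)) hij']
    have e1 : prm ℓ (affRef (eps i - eps j) (eps i - eps j) ((k : ℚ) * ℓ) x i) = prm ℓ (x j) := by
      rw [affSub_i x i j hij']
      exact prm_shift' ℓ (x j) _ (k * ℓ) (by push_cast; ring) (dvd_mul_left _ _)
    have e2 : prm ℓ (affRef (eps i - eps j) (eps i - eps j) ((k : ℚ) * ℓ) x j) = prm ℓ (x i) := by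
      rw [affSub_j x i j hij']
      exact prm_shift' ℓ (x i) _ (-(k * ℓ)) (by push_cast; ring) ((dvd_mul_left _ _).neg_right)
    rw [e1, e2]
    congr 1
    · exact add_comm _ _
    · exact Finset.sum_congr rfl (fun t ht => by
        simp only [Finset.mem_erase] at ht
        rw [affSub_t x i j t ht.2.1 ht.1])
  · subst hor
    have hij' : i ≠ j := ne_of_lt hij
    unfold InvC
    rw [sum_split _ hij', sum_split (fun t => prm ℓ (x t)) hij']
    have e1 : prm ℓ (affRef (eps i + eps j) (eps i + eps j) ((k : ℚ) * ℓ) x i) = prm ℓ (x j) := by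
      rw [affAdd_i x i j hij',
        prm_shift' ℓ (-(x j)) _ (k * ℓ) (by push_cast; ring) (dvd_mul_left _ _)]
      exact prm_neg ℓ (x j)
    have e2 : prm ℓ (affRef (eps i + eps j) (eps i + eps j) ((k : ℚ) * ℓ) x j) = prm ℓ (x i) := by
      rw [affAdd_j x i j hij',
        prm_shift' ℓ (-(x i)) _ (k * ℓ) (by push_cast; ring) (dvd_mul_left _ _)]
      exact prm_neg ℓ (x i)
    rw [e1, e2]
    congr 1
    · exact add_comm _ _
    · exact Finset.sum_congr rfl (fun t ht => by
        simp only [Finset.mem_erase] at ht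
        rw [affAdd_t x i j t ht.2.1 ht.1])
  · subst hor
    obtain ⟨m, hm, hdvd⟩ : ∃ m : ℤ, (2:ℚ) * ((k : ℚ) * ((ℓ : ℚ) / (Nat.gcd ℓ 2))) = ((m:ℤ):ℚ) ∧
        (ℓ:ℤ) ∣ m := by
      have hg : Nat.gcd ℓ 2 ∣ 2 := Nat.gcd_dvd_right ℓ 2
      rcases (Nat.dvd_prime Nat.prime_two).mp hg with h1 | h2
      · exact ⟨2 * k * ℓ, by rw [h1]; push_cast; ring, ⟨2 * k, by ring⟩⟩
      · exact ⟨k * ℓ, by rw [h2]; push_cast; ring, dvd_mul_left _ _⟩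
    unfold InvC
    apply Finset.sum_congr rfl
    intro t _
    by_cases hti : t = i
    · subst hti
      rw [affLong_i, prm_shift' ℓ (-(x t)) _ m hm hdvd]
      exact prm_neg ℓ (x t)
    · rw [affLong_t x i t hti]

lemma InvC_linked {N ℓ : ℕ} {x y : Fin N → ℚ} (h : CLinked N ℓ x y) :
    InvC ℓ N x = InvC ℓ N y := by
  induction h with
  | rel u v huv => obtain ⟨f, hf, rfl⟩ := huv; exact (InvC_ref hf u).symm
  | refl u => rfl
  | symm u v _ ih => exact ih.symm
  | trans u v w _ _ ih1 ih2 => exact ih1.trans ih2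

lemma key_ring {R : Type*} [CommRing R] {A B : R}
    (h1 : A - 1 = A ∨ A - 1 = -A ∨ A - 1 = B + 1 ∨ A - 1 = -(B + 1))
    (h2 : -A = A - 1 ∨ -A = -(A - 1) ∨ -A = B ∨ -A = -B)
    (h3 : B = A ∨ B = -A ∨ B = B + 1 ∨ B = -(B + 1))
    (h4 : B + 1 = A - 1 ∨ B + 1 = -(A - 1) ∨ B + 1 = B ∨ B + 1 = -B) :
    A + B = 0 := by
  rcases h1 with e1 | e1 | e1 | e1
  · linear_combination (-(A + B)) * e1
  · rcases h3 with e3 | e3 | e3 | e3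
    · rcases h4 with e4 | e4 | e4 | e4
      · linear_combination A * e4 + (1 - A) * e3
      · linear_combination e4
      · linear_combination (A + B) * e4
      · linear_combination A * e4 - B * e1
    · linear_combination e3
    · linear_combination (-(A + B)) * e3
    · linear_combination A * e3 - B * e1
  · rcases h2 with e2 | e2 | e2 | e2
    · rcases h3 with e3 | e3 | e3 | e3
      · linear_combination (A + B) * e2 - (A + B) * A * e1 - (A + B) * A * e3
      · linear_combination e3
      · linear_combination (-(A + B)) * e3
      · linear_combination B * e2 + A * e3
    · linear_combination (-(A + B)) * e2
    · linear_combination -e2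
    · linear_combination (-B) * e1 + (-(B + 1)) * e2
  · linear_combination e1

lemma pair_add_pair {α : Type*} (a b c d : α) :
    ({a, b} : Multiset α) + {c, d} = {a, b, c, d} := rfl

/-- Type `C` linkage for mixed operators: if `λ`, `μ = λ − ε_i` and `ν = λ + ε_j` are
dominant with `i ≠ j`, then `μ` and `ν` are linked under `W_ℓ` if and only if
`(λ+ρ)_i ≡ −(λ+ρ)_j (mod ℓ)`. -/
theorem linked_e_f_typeC (N ℓ : ℕ) (hl : 0 < ℓ) (lam : Fin N → ℤ)
    (hlam : DominantC N lam) (i j : Fin N) (hij : i ≠ j)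
    (hmu : DominantC N (subE lam i)) (hnu : DominantC N (addE lam j)) :
    CLinked N ℓ (shiftC N (subE lam i)) (shiftC N (addE lam j)) ↔
      (ℓ : ℤ) ∣ ((lam i + ((N : ℤ) - (i : ℕ))) + (lam j + ((N : ℤ) - (j : ℕ)))) := by
  haveI : NeZero ℓ := ⟨hl.ne'⟩
  set x := shiftC N (subE lam i) with hxdef
  set y := shiftC N (addE lam j) with hydef
  set c : Fin N → ℤ := fun t => lam t + ((N : ℤ) - (t : ℕ)) with hcdef
  have hxi : x i = ((c i - 1 : ℤ) : ℚ) := by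
    simp only [hxdef, shiftC, subE, if_pos rfl, hcdef]
    push_cast
    ring
  have hxt : ∀ t, t ≠ i → x t = ((c t : ℤ) : ℚ) := by
    intro t ht
    simp only [hxdef, shiftC, subE, if_neg ht, hcdef]
    push_cast
    ring
  have hyj : y j = ((c j + 1 : ℤ) : ℚ) := by
    simp only [hydef, shiftC, addE, if_pos rfl, hcdef]
    push_cast
    ring
  have hyt : ∀ t, t ≠ j → y t = ((c t : ℤ) : ℚ) := by
    intro t ht
    simp only [hydef, shiftC, addE, if_neg ht, hcdef]
    push_cast
    ring
  constructor
  · -- forward direction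
    intro h
    have hsum : ∑ t, prm ℓ (x t) = ∑ t, prm ℓ (y t) := InvC_linked h
    have E := pair_cancel (fun t => prm ℓ (x t)) (fun t => prm ℓ (y t)) hij
      (fun t hti htj => by
        show prm ℓ (x t) = prm ℓ (y t)
        rw [hxt t hti, hyt t htj]) hsum
    set A : ZMod ℓ := ((c i : ℤ) : ZMod ℓ) with hA
    set B : ZMod ℓ := ((c j : ℤ) : ZMod ℓ) with hB
    have exi : prm ℓ (x i) = ({A - 1, -(A - 1)} : Multiset (ZMod ℓ)) := by
      rw [hxi, prm_int]
      congr 1 <;> push_cast <;> ring_nf <;> rfl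
    have exj : prm ℓ (x j) = ({B, -B} : Multiset (ZMod ℓ)) := by
      rw [hxt j (Ne.symm hij), prm_int]
    have eyi : prm ℓ (y i) = ({A, -A} : Multiset (ZMod ℓ)) := by
      rw [hyt i hij, prm_int]
    have eyj : prm ℓ (y j) = ({B + 1, -(B + 1)} : Multiset (ZMod ℓ)) := by
      rw [hyj, prm_int]
      congr 1 <;> push_cast <;> ring_nf <;> rfl
    rw [exi, exj, eyi, eyj, pair_add_pair, pair_add_pair] at E
    have m1 : (A - 1 : ZMod ℓ) ∈ ({A, -A, B + 1, -(B + 1)} : Multiset (ZMod ℓ)) := by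
      rw [← E]; simp
    have m2 : (-A : ZMod ℓ) ∈ ({A - 1, -(A - 1), B, -B} : Multiset (ZMod ℓ)) := by
      rw [E]; simp
    have m3 : (B : ZMod ℓ) ∈ ({A, -A, B + 1, -(B + 1)} : Multiset (ZMod ℓ)) := by
      rw [← E]; simp
    have m4 : (B + 1 : ZMod ℓ) ∈ ({A - 1, -(A - 1), B, -B} : Multiset (ZMod ℓ)) := by
      rw [E]; simp
    simp only [Multiset.insert_eq_cons, Multiset.mem_cons, Multiset.mem_singleton] at m1 m2 m3 m4
    have hAB : A + B = 0 := key_ring m1 m2 m3 m4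
    have : ((c i + c j : ℤ) : ZMod ℓ) = 0 := by push_cast; exact hAB
    exact (ZMod.intCast_zmod_eq_zero_iff_dvd _ ℓ).mp this
  · -- backward direction
    intro hdvd
    obtain ⟨k, hk⟩ : ∃ k : ℤ, c i + c j = ℓ * k := hdvd
    rcases lt_or_gt_of_ne hij with hlt | hgt
    · apply Relation.EqvGen.rel
      refine ⟨affRef (eps i + eps j) (eps i + eps j) ((k : ℚ) * ℓ),
        Or.inl ⟨i, j, k, hlt, Or.inr rfl⟩, ?_⟩
      funext t
      by_cases hti : t = i
      · rw [hti, affAdd_i x i j hij, hxt j (Ne.symm hij), hyt i hij]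
        push_cast
        have hq : (c i : ℚ) + (c j : ℚ) = (ℓ : ℚ) * (k : ℚ) := by exact_mod_cast hk
        linarith
      · by_cases htj : t = j
        · rw [htj, affAdd_j x i j hij, hxi, hyj]
          push_cast
          have hq : (c i : ℚ) + (c j : ℚ) = (ℓ : ℚ) * (k : ℚ) := by exact_mod_cast hk
          linarith
        · rw [affAdd_t x i j t hti htj, hxt t hti, hyt t htj]
    · apply Relation.EqvGen.rel
      refine ⟨affRef (eps j + eps i) (eps j + eps i) ((k : ℚ) * ℓ),
        Or.inl ⟨j, i, k, hgt, Or.inr rfl⟩, ?_⟩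
      funext t
      by_cases hti : t = i
      · rw [hti, affAdd_j x j i (Ne.symm hij), hxt j (Ne.symm hij), hyt i hij]
        push_cast
        have hq : (c i : ℚ) + (c j : ℚ) = (ℓ : ℚ) * (k : ℚ) := by exact_mod_cast hk
        linarith
      · by_cases htj : t = j
        · rw [htj, affAdd_i x j i (Ne.symm hij), hxi, hyj]
          push_cast
          have hq : (c i : ℚ) + (c j : ℚ) = (ℓ : ℚ) * (k : ℚ) := by exact_mod_cast hk
          linarith
        · rw [affAdd_t x j i t htj hti, hxt t hti, hyt t htj]
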